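/- Taking cumulative column sums and recording, for each k, the set of column positions of the k ones in row k of the cumulative sum matrix, gives a bijection between n×n alternating sign matrices and complete monotone triangles of order n. -/

import Mathlib

open Finset

/-- An alternating sign matrix: entries in `{-1,0,1}`, all row and column sums `1`,
and in each row and column the nonzero entries alternate in sign (equivalently,
all partial row and column sums lie in `{0,1}`). -/
def IsASM (n : ℕ) (A : Matrix (Fin n) (Fin n) ℤ) : Prop :=
  (∀ i j, A i j = -1 ∨ A i j = 0 ∨ A i j = 1) ∧
  (∀ i, ∑ j, A i j = 1) ∧
  (∀ j, ∑ i, A i j = 1) ∧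
  (∀ i k, (∑ j ∈ univ.filter (· ≤ k), A i j) = 0 ∨ (∑ j ∈ univ.filter (· ≤ k), A i j) = 1) ∧
  (∀ j k, (∑ i ∈ univ.filter (· ≤ k), A i j) = 0 ∨ (∑ i ∈ univ.filter (· ≤ k), A i j) = 1)

/-- Cumulative column sums: the `(k,j)` entry is `∑_{i ≤ k} A i j`. -/
def colPartial (n : ℕ) (A : Matrix (Fin n) (Fin n) ℤ) (k j : Fin n) : ℤ :=
  ∑ i ∈ univ.filter (· ≤ k), A i j

/-- A triangular array with `n` rows, row `k` (0-indexed) having `k+1` integer entries. -/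
def CMTri (n : ℕ) := ∀ k : Fin n, Fin (k.val + 1) → ℤ

/-- A complete monotone triangle of order `n`: rows strictly increasing, bottom row
`(1,2,...,n)`, and each non-bottom entry weakly between its two lower neighbours. -/
def IsCMT (n : ℕ) (t : CMTri n) : Prop :=
  (∀ k, StrictMono (t k)) ∧
  (∀ (hn : 0 < n) (i : Fin n),
      t ⟨n - 1, by omega⟩ ⟨i.val, by have := i.isLt; simp only [Fin.val_mk]; omega⟩ = (i.val : ℤ) + 1) ∧
  (∀ (k : Fin n) (h : k.val + 1 < n) (i : Fin (k.val + 1)),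
      t ⟨k.val + 1, h⟩ ⟨i.val, by have := i.isLt; simp only [Fin.val_mk]; omega⟩ ≤ t k i ∧
      t k i ≤ t ⟨k.val + 1, h⟩ ⟨i.val + 1, by have := i.isLt; simp only [Fin.val_mk]; omega⟩)

/-- The triangle `t` records, in each row `k`, the positions of the ones in row `k`
of the cumulative column sum matrix of `A`. -/
def Corresponds (n : ℕ) (A : Matrix (Fin n) (Fin n) ℤ) (t : CMTri n) : Prop :=
  ∀ k : Fin n,
    (univ : Finset (Fin (k.val + 1))).image (t k) =
      (univ.filter fun j : Fin n => colPartial n A k j = 1).image (fun j => (j.val : ℤ) + 1)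


lemma downset_mem_iff {m : ℕ} (D : Finset (Fin m))
    (hD : ∀ i j : Fin m, i ≤ j → j ∈ D → i ∈ D) (i : Fin m) : i ∈ D ↔ i.val < D.card := by
  constructor
  · intro hi
    have hsub : Finset.Iic i ⊆ D := fun j hj => hD j i (by simpa using hj) hi
    have := Finset.card_le_card hsub
    rw [Fin.card_Iic] at this; omega
  · intro hi
    by_contra hnot
    have hsub : D ⊆ Finset.Iio i := by
      intro j hj
      simp only [Finset.mem_Iio]
      by_contra hji
      exact hnot (hD i j (le_of_not_gt hji) hj)
    have := Finset.card_le_card hsub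
    rw [Fin.card_Iio] at this; omega

lemma strictMono_le_count {m : ℕ} {α : Type*} [LinearOrder α] {f : Fin m → α} (hf : StrictMono f)
    (x : α) (i : Fin m) : f i ≤ x ↔ i.val < (univ.filter (fun i => f i ≤ x)).card := by
  have := downset_mem_iff (univ.filter (fun i => f i ≤ x))
    (fun i j hij hj => by
      simp only [mem_filter, mem_univ, true_and] at *
      exact le_trans (hf.monotone hij) hj) i
  simpa using this

lemma sum_indicator_card {α : Type*} [DecidableEq α] (s : Finset α) (f : α → ℤ)
    (hf : ∀ a ∈ s, f a = 0 ∨ f a = 1) :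
    ∑ a ∈ s, f a = ((s.filter (fun a => f a = 1)).card : ℤ) := by
  rw [show ∑ a ∈ s, f a = ∑ a ∈ s, (if f a = 1 then (1:ℤ) else 0) from
    Finset.sum_congr rfl (fun a ha => by rcases hf a ha with h | h <;> simp [h])]
  simp [Finset.sum_boole]

lemma filter_le_eq_Iic {n : ℕ} (k : Fin n) : univ.filter (· ≤ k) = Finset.Iic k := by
  ext i; simp

lemma filter_le_succ {n : ℕ} (k : ℕ) (h : k + 1 < n) :
    (univ.filter (· ≤ (⟨k+1, h⟩ : Fin n))) =
      insert ⟨k+1, h⟩ (univ.filter (· ≤ (⟨k, by omega⟩ : Fin n))) := by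
  ext i
  simp only [mem_filter, mem_univ, true_and, mem_insert, Fin.le_def, Fin.ext_iff]
  omega

-- positions of ones
def asmS {n : ℕ} (A : Matrix (Fin n) (Fin n) ℤ) (k : Fin n) : Finset (Fin n) :=
  univ.filter (fun j => colPartial n A k j = 1)

lemma colPartial01 {n : ℕ} {A : Matrix (Fin n) (Fin n) ℤ} (hA : IsASM n A) (k j : Fin n) :
    colPartial n A k j = 0 ∨ colPartial n A k j = 1 := hA.2.2.2.2 j k

lemma asmS_card {n : ℕ} {A : Matrix (Fin n) (Fin n) ℤ} (hA : IsASM n A) (k : Fin n) :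
    (asmS A k).card = k.val + 1 := by
  have h1 : ∑ j, colPartial n A k j = ((asmS A k).card : ℤ) := by
    simpa [asmS] using sum_indicator_card univ (colPartial n A k) (fun j _ => colPartial01 hA k j)
  have h2 : ∑ j, colPartial n A k j = (k.val : ℤ) + 1 := by
    unfold colPartial
    rw [Finset.sum_comm]
    rw [Finset.sum_congr rfl (fun i _ => hA.2.1 i)]
    rw [filter_le_eq_Iic]
    simp [Fin.card_Iic]
  rw [h1] at h2
  exact_mod_cast h2

-- partial cardinality
lemma asmS_count {n : ℕ} {A : Matrix (Fin n) (Fin n) ℤ} (hA : IsASM n A) (k x : Fin n) :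
    (((asmS A k).filter (· ≤ x)).card : ℤ) = ∑ j ∈ Finset.Iic x, colPartial n A k j := by
  rw [sum_indicator_card (Finset.Iic x) (colPartial n A k) (fun j _ => colPartial01 hA k j)]
  congr 2
  ext j
  simp only [asmS, mem_filter, mem_univ, true_and, Finset.mem_Iic]
  tauto

lemma colPartial_succ {n : ℕ} (A : Matrix (Fin n) (Fin n) ℤ) (k : ℕ) (h : k + 1 < n) (j : Fin n) :
    colPartial n A ⟨k+1, h⟩ j = colPartial n A ⟨k, by omega⟩ j + A ⟨k+1, h⟩ j := by
  unfold colPartial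
  rw [filter_le_succ k h, Finset.sum_insert (by simp [Fin.ext_iff])]
  ring

lemma asmS_count_succ {n : ℕ} {A : Matrix (Fin n) (Fin n) ℤ} (hA : IsASM n A) (k : ℕ)
    (h : k + 1 < n) (x : Fin n) :
    (((asmS A ⟨k+1, h⟩).filter (· ≤ x)).card : ℤ) =
      (((asmS A ⟨k, by omega⟩).filter (· ≤ x)).card : ℤ) + ∑ j ∈ Finset.Iic x, A ⟨k+1, h⟩ j := by
  rw [asmS_count hA, asmS_count hA, ← Finset.sum_add_distrib]
  exact Finset.sum_congr rfl (fun j _ => colPartial_succ A k h j)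

lemma rowPartial01 {n : ℕ} {A : Matrix (Fin n) (Fin n) ℤ} (hA : IsASM n A) (i x : Fin n) :
    (∑ j ∈ Finset.Iic x, A i j) = 0 ∨ (∑ j ∈ Finset.Iic x, A i j) = 1 := by
  rw [← filter_le_eq_Iic]
  exact hA.2.2.2.1 i x

lemma orderEmb_le_iff {n m : ℕ} (s : Finset (Fin n)) (h : s.card = m) (i : Fin m) (x : Fin n) :
    s.orderEmbOfFin h i ≤ x ↔ i.val < (s.filter (· ≤ x)).card := by
  have himg : univ.image (s.orderEmbOfFin h) = s := by
    apply Finset.coe_injective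
    rw [Finset.coe_image, Finset.coe_univ, Set.image_univ, Finset.range_orderEmbOfFin]
  have hcard : (univ.filter (fun i => s.orderEmbOfFin h i ≤ x)).card
      = (s.filter (· ≤ x)).card := by
    have : (univ.filter (fun i => s.orderEmbOfFin h i ≤ x)).image (s.orderEmbOfFin h)
        = s.filter (· ≤ x) := by
      conv_rhs => rw [← himg, Finset.filter_image]
    rw [← this, Finset.card_image_of_injective _ (s.orderEmbOfFin h).injective]
  rw [strictMono_le_count (s.orderEmbOfFin h).strictMono x i, hcard]

lemma orderEmb_image {n m : ℕ} (s : Finset (Fin n)) (h : s.card = m) :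
    univ.image (s.orderEmbOfFin h) = s := by
  apply Finset.coe_injective
  rw [Finset.coe_image, Finset.coe_univ, Set.image_univ, Finset.range_orderEmbOfFin]

def fwdT {n : ℕ} (A : Matrix (Fin n) (Fin n) ℤ) (hA : IsASM n A) : CMTri n :=
  fun k i => (((asmS A k).orderEmbOfFin (asmS_card hA k) i).val : ℤ) + 1

lemma fwdT_corr {n : ℕ} (A : Matrix (Fin n) (Fin n) ℤ) (hA : IsASM n A) :
    Corresponds n A (fwdT A hA) := by
  intro k
  show _ = (asmS A k).image _
  rw [← orderEmb_image (asmS A k) (asmS_card hA k), Finset.image_image]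
  rfl

lemma fwdT_isCMT {n : ℕ} (A : Matrix (Fin n) (Fin n) ℤ) (hA : IsASM n A) :
    IsCMT n (fwdT A hA) := by
  refine ⟨?_, ?_, ?_⟩
  · intro k a b hab
    have := ((asmS A k).orderEmbOfFin (asmS_card hA k)).strictMono hab
    rw [Fin.lt_def] at this
    simp only [fwdT]
    omega
  · intro hn i
    set kk : Fin n := ⟨n - 1, by omega⟩ with hkk
    have hlt : ∀ x : Fin (kk.val + 1), x.val < n := fun x => by
      have := x.isLt; simp only [hkk] at this ⊢; omega
    have hS : asmS A kk = univ := by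
      ext j
      simp only [asmS, mem_filter, mem_univ, true_and, iff_true]
      have hfilt : (univ.filter (· ≤ kk)) = (univ : Finset (Fin n)) := by
        ext i; simp only [mem_filter, mem_univ, true_and, iff_true, Fin.le_def, hkk]
        have := i.isLt; omega
      show colPartial n A kk j = 1
      unfold colPartial
      rw [hfilt]
      exact hA.2.2.1 j
    have huni := Finset.orderEmbOfFin_unique (f := fun x : Fin (kk.val + 1) => (⟨x.val, hlt x⟩ : Fin n))
      (asmS_card hA kk) (fun x => by rw [hS]; exact mem_univ _)
      (fun a b hab => by rw [Fin.lt_def] at *; exact hab)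
    have := congrFun huni ⟨i.val, by have := i.isLt; simp only [hkk, Fin.val_mk]; omega⟩
    simp only [fwdT, ← this]
    exact (congrArg (fun y : Fin n => (y.val : ℤ) + 1) this).symm
  · intro k h i
    set k' : Fin n := ⟨k.val + 1, h⟩ with hk'
    constructor
    · show (((asmS A k').orderEmbOfFin (asmS_card hA k') ⟨i.val, Nat.lt_succ_of_lt i.isLt⟩).val : ℤ) + 1
        ≤ (((asmS A k).orderEmbOfFin (asmS_card hA k) i).val : ℤ) + 1
      have hx := (orderEmb_le_iff (asmS A k) (asmS_card hA k) i
        ((asmS A k).orderEmbOfFin (asmS_card hA k) i)).mp (le_refl _)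
      set x := (asmS A k).orderEmbOfFin (asmS_card hA k) i with hxdef
      have hcx := asmS_count_succ hA k.val h x
      simp only [Fin.eta] at hcx
      rw [← hk'] at hcx
      have h2 : (asmS A k').orderEmbOfFin (asmS_card hA k') ⟨i.val, Nat.lt_succ_of_lt i.isLt⟩ ≤ x := by
        rw [orderEmb_le_iff]
        simp only [Fin.val_mk]
        rcases rowPartial01 hA k' x with hr | hr <;> rw [hr] at hcx <;> omega
      rw [Fin.le_def] at h2
      omega
    · show (((asmS A k).orderEmbOfFin (asmS_card hA k) i).val : ℤ) + 1
        ≤ (((asmS A k').orderEmbOfFin (asmS_card hA k') ⟨i.val + 1, Nat.succ_lt_succ i.isLt⟩).val : ℤ) + 1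
      have hx := (orderEmb_le_iff (asmS A k') (asmS_card hA k') ⟨i.val + 1, Nat.succ_lt_succ i.isLt⟩
        ((asmS A k').orderEmbOfFin (asmS_card hA k') ⟨i.val + 1, Nat.succ_lt_succ i.isLt⟩)).mp (le_refl _)
      simp only [Fin.val_mk] at hx
      set x := (asmS A k').orderEmbOfFin (asmS_card hA k') ⟨i.val + 1, Nat.succ_lt_succ i.isLt⟩ with hxdef
      have hcx := asmS_count_succ hA k.val h x
      simp only [Fin.eta] at hcx
      rw [← hk'] at hcx
      have h2 : (asmS A k).orderEmbOfFin (asmS_card hA k) i ≤ x := by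
        rw [orderEmb_le_iff]
        rcases rowPartial01 hA k' x with hr | hr <;> rw [hr] at hcx <;> omega
      rw [Fin.le_def] at h2
      omega

section
variable {n : ℕ}

def triT (t : CMTri n) (k : Fin n) : Finset (Fin n) :=
  univ.filter (fun j => ((j.val : ℤ) + 1) ∈ (univ : Finset (Fin (k.val + 1))).image (t k))

def triN (t : CMTri n) (k j : Fin n) : ℤ := if j ∈ triT t k then 1 else 0

def bwdA (t : CMTri n) : Matrix (Fin n) (Fin n) ℤ :=
  fun k j => triN t k j - (if hk : 0 < k.val then triN t ⟨k.val - 1, by have := k.isLt; omega⟩ j else 0)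

lemma tri_bounds {t : CMTri n} (hT : IsCMT n t) :
    ∀ d m (hm : m < n), m + d = n - 1 → ∀ i : Fin (m + 1),
      1 ≤ t ⟨m, hm⟩ i ∧ t ⟨m, hm⟩ i ≤ n := by
  intro d
  induction d with
  | zero =>
    intro m hm hd i
    have hm' : m = n - 1 := by omega
    subst hm'
    have heq : t ⟨n - 1, hm⟩ i = (i.val : ℤ) + 1 :=
      hT.2.1 (by omega) ⟨i.val, by have := i.isLt; omega⟩
    rw [heq]
    have := i.isLt
    constructor <;> omega
  | succ d ih =>
    intro m hm hd i
    have h1 : m + 1 < n := by omega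
    obtain ⟨hl, hr⟩ := hT.2.2 ⟨m, hm⟩ h1 i
    have ihl := ih (m + 1) h1 (by omega) ⟨i.val, Nat.lt_succ_of_lt i.isLt⟩
    have ihr := ih (m + 1) h1 (by omega) ⟨i.val + 1, Nat.succ_lt_succ i.isLt⟩
    exact ⟨le_trans ihl.1 hl, le_trans hr ihr.2⟩

lemma tri_bounds' {t : CMTri n} (hT : IsCMT n t) (k : Fin n) (i : Fin (k.val + 1)) :
    1 ≤ t k i ∧ t k i ≤ n := by
  have := tri_bounds hT (n - 1 - k.val) k.val k.isLt (by have := k.isLt; omega) i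
  simpa using this

lemma triT_image {t : CMTri n} (hT : IsCMT n t) (k : Fin n) :
    (triT t k).image (fun j => (j.val : ℤ) + 1) =
      (univ : Finset (Fin (k.val + 1))).image (t k) := by
  ext v
  simp only [triT, Finset.mem_image, mem_filter, mem_univ, true_and]
  constructor
  · rintro ⟨j, hj, rfl⟩; exact hj
  · intro hv
    obtain ⟨i, rfl⟩ := hv
    obtain ⟨hb1, hb2⟩ := tri_bounds' hT k i
    refine ⟨⟨(t k i - 1).toNat, by omega⟩, ?_, by simp; omega⟩
    rw [show ((⟨(t k i - 1).toNat, by omega⟩ : Fin n).val : ℤ) + 1 = t k i by simp; omega]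
    exact ⟨i, rfl⟩

lemma val_succ_inj : Function.Injective (fun j : Fin n => (j.val : ℤ) + 1) := by
  intro a b hab
  simp only at hab
  exact Fin.ext (by omega)

lemma triT_card {t : CMTri n} (hT : IsCMT n t) (k : Fin n) :
    (triT t k).card = k.val + 1 := by
  have h1 := Finset.card_image_of_injective (triT t k) (val_succ_inj (n := n))
  rw [triT_image hT k] at h1
  rw [← h1, Finset.card_image_of_injective _ (hT.1 k).injective, card_univ, Fintype.card_fin]

lemma triN_mem_iff (t : CMTri n) (k j : Fin n) : triN t k j = 1 ↔ j ∈ triT t k := by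
  unfold triN; split <;> simp_all

lemma triN_sum {t : CMTri n} (hT : IsCMT n t) (k : Fin n) :
    ∑ j, triN t k j = (k.val : ℤ) + 1 := by
  have h01 : ∀ j ∈ (univ : Finset (Fin n)), triN t k j = 0 ∨ triN t k j = 1 := by
    intro j _; unfold triN; split <;> simp
  rw [sum_indicator_card univ (triN t k) h01]
  have : univ.filter (fun j => triN t k j = 1) = triT t k := by
    ext j; simp [triN_mem_iff]
  rw [this, triT_card hT k]
  push_cast; ring

lemma triN_psum (t : CMTri n) (k x : Fin n) :
    ∑ j ∈ univ.filter (· ≤ x), triN t k j = (((triT t k).filter (· ≤ x)).card : ℤ) := by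
  have h01 : ∀ j ∈ univ.filter (· ≤ x), triN t k j = 0 ∨ triN t k j = 1 := by
    intro j _; unfold triN; split <;> simp
  rw [sum_indicator_card _ (triN t k) h01]
  congr 2
  ext j
  simp only [mem_filter, mem_univ, true_and, triN_mem_iff, triT]
  tauto

lemma bwd_colPartial (t : CMTri n) (k j : Fin n) :
    colPartial n (bwdA t) k j = triN t k j := by
  obtain ⟨m, hm⟩ := k
  induction m with
  | zero =>
    unfold colPartial
    have hs : univ.filter (· ≤ (⟨0, hm⟩ : Fin n)) = {⟨0, hm⟩} := by
      ext i; simp [Fin.le_def, Fin.ext_iff]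
    rw [hs, Finset.sum_singleton]
    simp [bwdA]
  | succ m ih =>
    unfold colPartial
    rw [filter_le_succ m hm, Finset.sum_insert (by simp [Fin.ext_iff])]
    have hprev := ih (by omega)
    unfold colPartial at hprev
    rw [hprev]
    show bwdA t ⟨m + 1, hm⟩ j + triN t ⟨m, by omega⟩ j = _
    unfold bwdA
    rw [dif_pos (Nat.succ_pos m)]
    show triN t ⟨m + 1, hm⟩ j - triN t ⟨m, by omega⟩ j + triN t ⟨m, by omega⟩ j = _
    ring

-- the D-count
lemma C_eq_D {t : CMTri n} (hT : IsCMT n t) (k x : Fin n) :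
    ((triT t k).filter (· ≤ x)).card =
      (univ.filter (fun i : Fin (k.val + 1) => t k i ≤ (x.val : ℤ) + 1)).card := by
  have himg : ((triT t k).filter (· ≤ x)).image (fun j => (j.val : ℤ) + 1) =
      (univ.filter (fun i : Fin (k.val + 1) => t k i ≤ (x.val : ℤ) + 1)).image (t k) := by
    ext v
    simp only [Finset.mem_image, mem_filter, mem_univ, true_and, triT]
    constructor
    · rintro ⟨j, ⟨⟨i, hi⟩, hjx⟩, rfl⟩
      refine ⟨i, ?_, hi⟩
      rw [hi]
      rw [Fin.le_def] at hjx
      omega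
    · rintro ⟨i, hix, rfl⟩
      obtain ⟨hb1, hb2⟩ := tri_bounds' hT k i
      refine ⟨⟨(t k i - 1).toNat, by omega⟩, ⟨⟨i, by simp; omega⟩, ?_⟩, by simp; omega⟩
      rw [Fin.le_def]
      simp only [Fin.val_mk]
      omega
  have h1 := Finset.card_image_of_injective ((triT t k).filter (· ≤ x)) (val_succ_inj (n := n))
  have h2 := Finset.card_image_of_injective
    (univ.filter (fun i : Fin (k.val + 1) => t k i ≤ (x.val : ℤ) + 1)) (hT.1 k).injective
  rw [← h1, himg, h2]

lemma count_mono {t : CMTri n} (hT : IsCMT n t) (m : ℕ) (hm : m + 1 < n) (x : Fin n) :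
    ((triT t ⟨m, by omega⟩).filter (· ≤ x)).card ≤ ((triT t ⟨m + 1, hm⟩).filter (· ≤ x)).card ∧
    ((triT t ⟨m + 1, hm⟩).filter (· ≤ x)).card ≤ ((triT t ⟨m, by omega⟩).filter (· ≤ x)).card + 1 := by
  have hmn : m < n := by omega
  rw [show (⟨m, by omega⟩ : Fin n) = ⟨m, hmn⟩ from rfl]
  rw [C_eq_D hT ⟨m, hmn⟩ x, C_eq_D hT ⟨m + 1, hm⟩ x]
  show (univ.filter (fun i : Fin (m + 1) => t ⟨m, hmn⟩ i ≤ (x.val : ℤ) + 1)).card ≤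
      (univ.filter (fun i : Fin (m + 2) => t ⟨m + 1, hm⟩ i ≤ (x.val : ℤ) + 1)).card ∧
    (univ.filter (fun i : Fin (m + 2) => t ⟨m + 1, hm⟩ i ≤ (x.val : ℤ) + 1)).card ≤
      (univ.filter (fun i : Fin (m + 1) => t ⟨m, hmn⟩ i ≤ (x.val : ℤ) + 1)).card + 1
  set c := (univ.filter (fun i : Fin (m + 1) => t ⟨m, hmn⟩ i ≤ (x.val : ℤ) + 1)).card with hc
  set c' := (univ.filter (fun i : Fin (m + 2) => t ⟨m + 1, hm⟩ i ≤ (x.val : ℤ) + 1)).card with hc'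
  have hcle : c ≤ m + 1 := le_trans (Finset.card_filter_le _ _) (by simp)
  have hc'le : c' ≤ m + 2 := le_trans (Finset.card_filter_le _ _) (by simp)
  constructor
  · rcases Nat.eq_zero_or_pos c with h0 | h0
    · omega
    · have hlt1 : c - 1 < m + 1 := by omega
      have hi : t ⟨m, hmn⟩ ⟨c - 1, hlt1⟩ ≤ (x.val : ℤ) + 1 :=
        (strictMono_le_count (hT.1 ⟨m, hmn⟩) ((x.val : ℤ) + 1) ⟨c - 1, hlt1⟩).mpr
          (show c - 1 < c by omega)
      have hi2 := le_trans ((hT.2.2 ⟨m, hmn⟩ hm ⟨c - 1, hlt1⟩).1) hi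
      have hlt2 : c - 1 < m + 2 := by omega
      have hi3 : c - 1 < c' :=
        (strictMono_le_count (hT.1 ⟨m + 1, hm⟩) ((x.val : ℤ) + 1) ⟨c - 1, hlt2⟩).mp (by exact hi2)
      omega
  · rcases Nat.lt_or_ge c' 2 with h0 | h0
    · omega
    · have hlt1 : c' - 1 < m + 2 := by omega
      have hi : t ⟨m + 1, hm⟩ ⟨c' - 1, hlt1⟩ ≤ (x.val : ℤ) + 1 :=
        (strictMono_le_count (hT.1 ⟨m + 1, hm⟩) ((x.val : ℤ) + 1) ⟨c' - 1, hlt1⟩).mpr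
          (show c' - 1 < c' by omega)
      have hlt2 : c' - 2 < m + 1 := by omega
      have hint := (hT.2.2 ⟨m, hmn⟩ hm ⟨c' - 2, hlt2⟩).2
      have heqi : (⟨(⟨c' - 2, hlt2⟩ : Fin (m + 1)).val + 1, by simp only [Fin.val_mk]; omega⟩ :
          Fin (m + 2)) = ⟨c' - 1, hlt1⟩ := Fin.ext (by simp only [Fin.val_mk]; omega)
      have hint2 : t ⟨m, hmn⟩ ⟨c' - 2, hlt2⟩ ≤ t ⟨m + 1, hm⟩ ⟨c' - 1, hlt1⟩ := by
        rw [← heqi]; exact hint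
      have hi2 := le_trans hint2 hi
      have hi3 : c' - 2 < c :=
        (strictMono_le_count (hT.1 ⟨m, hmn⟩) ((x.val : ℤ) + 1) ⟨c' - 2, hlt2⟩).mp (by exact hi2)
      omega

lemma bwd_isASM {t : CMTri n} (hT : IsCMT n t) : IsASM n (bwdA t) := by
  have h01 : ∀ k j, triN t k j = 0 ∨ triN t k j = 1 := by
    intro k j; unfold triN; split <;> simp
  refine ⟨?_, ?_, ?_, ?_, ?_⟩
  · intro i j
    unfold bwdA
    rcases h01 i j with h1 | h1 <;> rw [h1] <;> split
    · rcases h01 ⟨i.val - 1, by have := i.isLt; omega⟩ j with h2 | h2 <;> rw [h2] <;> norm_num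
    · norm_num
    · rcases h01 ⟨i.val - 1, by have := i.isLt; omega⟩ j with h2 | h2 <;> rw [h2] <;> norm_num
    · norm_num
  · intro i
    unfold bwdA
    rw [Finset.sum_sub_distrib, triN_sum hT i]
    by_cases hi : 0 < i.val
    · rw [Finset.sum_congr rfl (fun j _ => dif_pos hi), triN_sum hT ⟨i.val - 1, by have := i.isLt; omega⟩]
      simp only [Fin.val_mk]
      omega
    · rw [Finset.sum_congr rfl (fun j _ => dif_neg hi)]
      have : i.val = 0 := by omega
      simp [this]
  · intro j
    have hn : 0 < n := j.pos
    have hfilt : (univ : Finset (Fin n)) = univ.filter (· ≤ (⟨n - 1, by omega⟩ : Fin n)) := by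
      ext i; simp only [mem_filter, mem_univ, true_and, iff_true, true_iff, Fin.le_def]
      have := i.isLt; omega
    rw [hfilt]
    have := bwd_colPartial t ⟨n - 1, by omega⟩ j
    unfold colPartial at this
    rw [this, triN_mem_iff]
    simp only [triT, mem_filter, mem_univ, true_and, Finset.mem_image]
    exact ⟨⟨j.val, by have := j.isLt; omega⟩, hT.2.1 hn j⟩
  · intro i x
    by_cases hi : 0 < i.val
    · obtain ⟨mv, hmv⟩ := i
      have hi' : 0 < mv := hi
      obtain ⟨m, rfl⟩ : ∃ m, mv = m + 1 := ⟨mv - 1, by omega⟩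
      have hsum : ∀ j, bwdA t ⟨m + 1, hmv⟩ j
          = triN t ⟨m + 1, hmv⟩ j - triN t ⟨m, by omega⟩ j := by
        intro j; unfold bwdA; rw [dif_pos (Nat.succ_pos m)]; rfl
      rw [Finset.sum_congr rfl (fun j _ => hsum j), Finset.sum_sub_distrib,
        triN_psum, triN_psum]
      have := count_mono hT m hmv x
      omega
    · have hi0 : i.val = 0 := by omega
      rw [show i = ⟨0, x.pos⟩ from Fin.ext hi0]
      have hsum : ∀ j, bwdA t ⟨0, x.pos⟩ j = triN t ⟨0, x.pos⟩ j := by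
        intro j; unfold bwdA; rw [dif_neg (by simp)]; ring
      rw [Finset.sum_congr rfl (fun j _ => hsum j), triN_psum]
      have hle : ((triT t ⟨0, x.pos⟩).filter (· ≤ x)).card ≤ 1 := by
        have := Finset.card_filter_le (triT t ⟨0, x.pos⟩) (· ≤ x)
        rw [triT_card hT] at this
        simpa using this
      omega
  · intro j k
    have := bwd_colPartial t k j
    unfold colPartial at this
    rw [this]
    rcases (show triN t k j = 0 ∨ triN t k j = 1 from by unfold triN; split <;> simp) with h | h
    · left; exact h
    · right; exact h

lemma bwd_corr {t : CMTri n} (hT : IsCMT n t) : Corresponds n (bwdA t) t := by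
  intro k
  have hfl : (univ.filter fun j : Fin n => colPartial n (bwdA t) k j = 1) = triT t k := by
    ext j
    simp only [mem_filter, mem_univ, true_and, bwd_colPartial, triN_mem_iff]
  rw [hfl, triT_image hT k]

lemma CMT_unique {t t' : CMTri n} (hT : IsCMT n t) (hT' : IsCMT n t')
    (h : ∀ k : Fin n, (univ : Finset (Fin (k.val + 1))).image (t k) =
      (univ : Finset (Fin (k.val + 1))).image (t' k)) : t = t' := by
  funext k
  have hc : ((univ : Finset (Fin (k.val + 1))).image (t k)).card = k.val + 1 := by
    rw [Finset.card_image_of_injective _ (hT.1 k).injective, card_univ, Fintype.card_fin]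
  have h1 := Finset.orderEmbOfFin_unique hc (f := t k)
    (fun x => Finset.mem_image_of_mem _ (mem_univ x)) (hT.1 k)
  have h2 := Finset.orderEmbOfFin_unique hc (f := t' k)
    (fun x => by rw [h k]; exact Finset.mem_image_of_mem _ (mem_univ x)) (hT'.1 k)
  rw [h1, h2]

lemma ASM_unique {A A' : Matrix (Fin n) (Fin n) ℤ} (hA : IsASM n A) (hA' : IsASM n A')
    {t : CMTri n} (h : Corresponds n A t) (h' : Corresponds n A' t) : A = A' := by
  have hmem : ∀ (B : Matrix (Fin n) (Fin n) ℤ) (k j : Fin n),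
      colPartial n B k j = 1 ↔ ((j.val : ℤ) + 1) ∈
        ((univ.filter fun j' : Fin n => colPartial n B k j' = 1).image
          (fun j' => ((j'.val : ℤ) + 1))) := by
    intro B k j
    constructor
    · intro h1
      exact Finset.mem_image_of_mem _ (by simp [h1])
    · intro h1
      obtain ⟨j', hj', hje⟩ := Finset.mem_image.mp h1
      have : j' = j := Fin.ext (by omega)
      subst this
      exact (mem_filter.mp hj').2
  have hcp : ∀ k j, colPartial n A k j = colPartial n A' k j := by
    intro k j
    have e : ((univ.filter fun j' : Fin n => colPartial n A k j' = 1).image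
          (fun j' => ((j'.val : ℤ) + 1)))
        = ((univ.filter fun j' : Fin n => colPartial n A' k j' = 1).image
          (fun j' => ((j'.val : ℤ) + 1))) := (h k).symm.trans (h' k)
    have hiff := (hmem A k j).trans (e ▸ (hmem A' k j).symm)
    rcases colPartial01 hA k j with h1 | h1 <;> rcases colPartial01 hA' k j with h2 | h2 <;>
      rw [h1, h2] at hiff ⊢ <;>
      first
        | rfl
        | exact hiff.mpr rfl
        | exact hiff.mp rfl
        | exact (hiff.mp rfl).symm
  funext k j
  obtain ⟨m, hm⟩ := k
  cases m with
  | zero =>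
    have h0 := hcp ⟨0, hm⟩ j
    unfold colPartial at h0
    have hs : univ.filter (· ≤ (⟨0, hm⟩ : Fin n)) = {(⟨0, hm⟩ : Fin n)} := by
      ext i
      simp only [mem_filter, mem_univ, true_and, Finset.mem_singleton, Fin.le_def,
        Fin.ext_iff, Fin.val_mk]
      omega
    rw [hs, Finset.sum_singleton, Finset.sum_singleton] at h0
    exact h0
  | succ m =>
    have h1 := hcp ⟨m + 1, hm⟩ j
    have h2 := hcp ⟨m, by omega⟩ j
    rw [colPartial_succ A m hm j, colPartial_succ A' m hm j, h2] at h1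
    omega
end

theorem stmt2 (n : ℕ) :
    ∃ e : {A : Matrix (Fin n) (Fin n) ℤ // IsASM n A} ≃ {t : CMTri n // IsCMT n t},
      ∀ A : {A : Matrix (Fin n) (Fin n) ℤ // IsASM n A}, Corresponds n A.val (e A).val := by
  refine ⟨⟨fun A => ⟨fwdT A.1 A.2, fwdT_isCMT A.1 A.2⟩,
           fun t => ⟨bwdA t.1, bwd_isASM t.2⟩, ?_, ?_⟩, ?_⟩
  · intro A
    apply Subtype.ext
    exact ASM_unique (bwd_isASM (fwdT_isCMT A.1 A.2)) A.2
      (bwd_corr (fwdT_isCMT A.1 A.2)) (fwdT_corr A.1 A.2)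
  · intro t
    apply Subtype.ext
    refine CMT_unique (fwdT_isCMT (bwdA t.1) (bwd_isASM t.2)) t.2 (fun k => ?_)
    rw [fwdT_corr (bwdA t.1) (bwd_isASM t.2) k, ← bwd_corr t.2 k]
  · intro A
    exact fwdT_corr A.1 A.2
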